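/- Let M be a unital *-subalgebra of the bounded operators on a Hilbert space H. Then M equals its double commutant M'' if and only if M is closed in the weak operator topology. -/

import Mathlib

open scoped InnerProductSpace ComplexConjugate NNReal

noncomputable section Aux
set_option linter.unusedSectionVars false
set_option synthInstance.maxHeartbeats 1000000
set_option maxHeartbeats 1000000

variable {H : Type*} [NormedAddCommGroup H] [InnerProductSpace ℂ H] [CompleteSpace H]

variable (H) in
def amp (ι : Type*) [Fintype ι] (a : H →L[ℂ] H) :
    (PiLp 2 fun _ : ι => H) →L[ℂ] (PiLp 2 fun _ : ι => H) :=
  (PiLp.continuousLinearEquiv 2 ℂ _).symm.toContinuousLinearMap ∘L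
    (ContinuousLinearMap.pi fun i => a ∘L ContinuousLinearMap.proj i) ∘L
    (PiLp.continuousLinearEquiv 2 ℂ _).toContinuousLinearMap

variable (H) in
def pic (ι : Type*) [Fintype ι] (i : ι) : (PiLp 2 fun _ : ι => H) →L[ℂ] H :=
  ContinuousLinearMap.proj i ∘L (PiLp.continuousLinearEquiv 2 ℂ _).toContinuousLinearMap

variable (H) in
def inc (ι : Type*) [Fintype ι] [DecidableEq ι] (i : ι) : H →L[ℂ] (PiLp 2 fun _ : ι => H) :=
  (PiLp.continuousLinearEquiv 2 ℂ _).symm.toContinuousLinearMap ∘L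
    (ContinuousLinearMap.pi fun j => if j = i then ContinuousLinearMap.id ℂ H else 0)

variable {ι : Type*} [Fintype ι]

instance : CompleteSpace (PiLp 2 fun _ : ι => H) :=
  inferInstance

lemma amp_apply (a : H →L[ℂ] H) (x : PiLp 2 fun _ : ι => H) (i : ι) :
    amp H ι a x i = a (x i) := rfl

lemma pic_apply (i : ι) (x : PiLp 2 fun _ : ι => H) : pic H ι i x = x i := rfl

lemma pic_amp (a : H →L[ℂ] H) (i : ι) (x : PiLp 2 fun _ : ι => H) :
    pic H ι i (amp H ι a x) = a (pic H ι i x) := rfl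

lemma inc_apply [DecidableEq ι] (i j : ι) (h : H) :
    inc H ι i h j = if j = i then h else 0 := by
  simp [inc, ContinuousLinearMap.pi_apply]
  split <;> rfl

lemma sum_inc [DecidableEq ι] (x : PiLp 2 fun _ : ι => H) :
    ∑ j, inc H ι j (x j) = x := by
  refine PiLp.ext fun i => ?_
  have h1 : (∑ j, inc H ι j (x j)) i = pic H ι i (∑ j, inc H ι j (x j)) := rfl
  rw [h1, map_sum]
  simp only [pic_apply, inc_apply]
  simp

lemma amp_mul (a b : H →L[ℂ] H) (x : PiLp 2 fun _ : ι => H) :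
    amp H ι (a * b) x = amp H ι a (amp H ι b x) := by
  refine PiLp.ext fun i => ?_; rfl

lemma amp_one (x : PiLp 2 fun _ : ι => H) : amp H ι 1 x = x := by refine PiLp.ext fun i => ?_; rfl

lemma amp_add (a b : H →L[ℂ] H) (x : PiLp 2 fun _ : ι => H) :
    amp H ι (a + b) x = amp H ι a x + amp H ι b x := by
  refine PiLp.ext fun i => ?_
  show (a + b) (x i) = amp H ι a x i + amp H ι b x i
  simp [amp_apply]

lemma amp_smul (c : ℂ) (a : H →L[ℂ] H) (x : PiLp 2 fun _ : ι => H) :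
    amp H ι (c • a) x = c • amp H ι a x := by
  refine PiLp.ext fun i => ?_
  show (c • a) (x i) = (c • amp H ι a x) i
  simp [amp_apply]

lemma amp_adjoint (a : H →L[ℂ] H) :
    ContinuousLinearMap.adjoint (amp H ι a) = amp H ι (ContinuousLinearMap.adjoint a) := by
  symm
  rw [ContinuousLinearMap.eq_adjoint_iff]
  intro x y
  rw [PiLp.inner_apply, PiLp.inner_apply]
  refine Finset.sum_congr rfl fun i _ => ?_
  rw [amp_apply, amp_apply, ContinuousLinearMap.adjoint_inner_left]

lemma pic_norm_le (i : ι) (x : PiLp 2 fun _ : ι => H) : ‖pic H ι i x‖ ≤ ‖x‖ := by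
  rw [pic_apply]
  have h := PiLp.norm_eq_of_L2 x
  rw [h]
  have : ‖x i‖ = Real.sqrt (‖x i‖ ^ 2) := by
    rw [Real.sqrt_sq (norm_nonneg _)]
  rw [this]
  apply Real.sqrt_le_sqrt
  exact Finset.single_le_sum (fun j _ => sq_nonneg ‖x j‖) (Finset.mem_univ i)


section Proj

variable {F : Type*} [NormedAddCommGroup F] [InnerProductSpace ℂ F] [CompleteSpace F]

lemma proj_comm (K : Submodule ℂ F) [K.HasOrthogonalProjection] (T : F →L[ℂ] F)
    (hT : ∀ v ∈ K, T v ∈ K) (hT' : ∀ v ∈ K, (ContinuousLinearMap.adjoint T) v ∈ K) (x : F) :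
    T (K.orthogonalProjectionOnto x : F) = (K.orthogonalProjectionOnto (T x) : F) := by
  symm
  apply Submodule.eq_starProjection_of_mem_orthogonal (hT _ (Submodule.coe_mem _))
  have h1 : x - (K.orthogonalProjectionOnto x : F) ∈ Kᗮ := K.sub_starProjection_mem_orthogonal x
  have h2 : T x - T (K.orthogonalProjectionOnto x : F) = T (x - (K.orthogonalProjectionOnto x : F)) := by
    rw [map_sub]
  rw [h2]
  rw [Submodule.mem_orthogonal]
  intro u hu
  have : ⟪u, T (x - (K.orthogonalProjectionOnto x : F))⟫_ℂ
      = ⟪ContinuousLinearMap.adjoint T u, x - (K.orthogonalProjectionOnto x : F)⟫_ℂ := by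
    rw [← ContinuousLinearMap.adjoint_adjoint T, ContinuousLinearMap.adjoint_inner_right,
      ContinuousLinearMap.adjoint_adjoint]
  rw [this]
  exact (Submodule.mem_orthogonal _ _).1 h1 _ (hT' u hu)

end Proj

lemma amp_zero {ι : Type*} [Fintype ι] : amp H ι (0 : H →L[ℂ] H) = 0 := by
  refine ContinuousLinearMap.ext fun x => PiLp.ext fun i => rfl

lemma amp_inc {ι : Type*} [Fintype ι] [DecidableEq ι] (a : H →L[ℂ] H) (j : ι) (h : H) :
    amp H ι a (inc H ι j h) = inc H ι j (a h) := by
  refine PiLp.ext fun k => ?_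
  rw [amp_apply, inc_apply, inc_apply]
  split
  · rfl
  · exact map_zero a

lemma key (M : StarSubalgebra ℂ (H →L[ℂ] H)) (T : H →L[ℂ] H)
    (hT : T ∈ Set.centralizer (Set.centralizer (M : Set (H →L[ℂ] H))))
    {ι : Type*} [Fintype ι] [DecidableEq ι] (ξ : PiLp 2 fun _ : ι => H) {ε : ℝ} (hε : 0 < ε) :
    ∃ a ∈ M, ‖amp H ι a ξ - amp H ι T ξ‖ < ε := by
  classical
  set W : Submodule ℂ (PiLp 2 fun _ : ι => H) :=
    { carrier := (fun a => amp H ι a ξ) '' (M : Set (H →L[ℂ] H))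
      add_mem' := by
        rintro _ _ ⟨a, ha, rfl⟩ ⟨b, hb, rfl⟩
        exact ⟨a + b, add_mem ha hb, amp_add a b ξ⟩
      zero_mem' := ⟨0, (zero_mem M.toSubalgebra : (0 : H →L[ℂ] H) ∈ M),
        by show amp H ι 0 ξ = 0; rw [amp_zero]; rfl⟩
      smul_mem' := by
        rintro c _ ⟨a, ha, rfl⟩
        exact ⟨c • a, SMulMemClass.smul_mem c ha, amp_smul c a ξ⟩ } with hW
  set K := W.topologicalClosure with hK
  haveI : CompleteSpace K := W.isClosed_topologicalClosure.completeSpace_coe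
  set P : (PiLp 2 fun _ : ι => H) →L[ℂ] (PiLp 2 fun _ : ι => H) :=
    K.subtypeL ∘L K.orthogonalProjectionOnto with hP
  -- invariance of K under amp a for a ∈ M
  have hinv : ∀ a ∈ M, ∀ v ∈ K, amp H ι a v ∈ K := by
    intro a ha v hv
    have hmaps : Set.MapsTo (amp H ι a) (W : Set _) (W : Set _) := by
      rintro _ ⟨b, hb, rfl⟩
      exact ⟨a * b, mul_mem ha hb, (amp_mul a b ξ).symm⟩
    exact hmaps.closure (amp H ι a).continuous hv
  -- P commutes with amp a for a ∈ M
  have hPa : ∀ a ∈ M, ∀ x, amp H ι a (P x) = P (amp H ι a x) := by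
    intro a ha x
    have hsa : ContinuousLinearMap.adjoint a ∈ M := by
      rw [← ContinuousLinearMap.star_eq_adjoint]; exact star_mem ha
    refine proj_comm K (amp H ι a) (fun v hv => hinv a ha v hv) ?_ x
    rw [amp_adjoint]
    exact fun v hv => hinv _ hsa v hv
  -- matrix entries of P
  set Pe : ι → ι → (H →L[ℂ] H) := fun i j => pic H ι i ∘L P ∘L inc H ι j with hPedef
  have hPe : ∀ i j, Pe i j ∈ Set.centralizer (M : Set (H →L[ℂ] H)) := by
    intro i j
    rw [Set.mem_centralizer_iff]
    intro m hm
    ext x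
    show m (Pe i j x) = Pe i j (m x)
    calc m (Pe i j x) = pic H ι i (amp H ι m (P (inc H ι j x))) := (pic_amp m i _).symm
      _ = pic H ι i (P (amp H ι m (inc H ι j x))) := by rw [hPa m hm]
      _ = pic H ι i (P (inc H ι j (m x))) := by rw [amp_inc]
      _ = Pe i j (m x) := rfl
  have hTPe : ∀ i j x, T (Pe i j x) = Pe i j (T x) := by
    intro i j x
    have h0 := hT _ (hPe i j)
    have h2 : (T * Pe i j) x = (Pe i j * T) x := by rw [h0]
    simpa [ContinuousLinearMap.mul_apply] using h2
  -- expansion of P through entries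
  have hexp : ∀ (x : PiLp 2 fun _ : ι => H) i, pic H ι i (P x) = ∑ j, Pe i j (x j) := by
    intro x i
    conv_lhs => rw [← sum_inc x]
    rw [map_sum, map_sum]
    rfl
  -- amp T commutes with P
  have hPT : ∀ x, amp H ι T (P x) = P (amp H ι T x) := by
    intro x
    refine PiLp.ext fun i => ?_
    have h1 : amp H ι T (P x) i = T (pic H ι i (P x)) := rfl
    have h2 : P (amp H ι T x) i = pic H ι i (P (amp H ι T x)) := rfl
    rw [h1, h2, hexp, hexp, map_sum]
    refine Finset.sum_congr rfl fun j _ => ?_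
    rw [hTPe]
    rfl
  -- ξ ∈ K
  have hKξ : ξ ∈ K := Submodule.le_topologicalClosure W ⟨1, one_mem M, amp_one ξ⟩
  have hPξ : P ξ = ξ := Submodule.starProjection_eq_self_iff.2 hKξ
  have hTK : amp H ι T ξ ∈ K := by
    have : amp H ι T ξ = P (amp H ι T ξ) := by
      conv_lhs => rw [← hPξ, hPT ξ]
    rw [this]
    exact Submodule.coe_mem _
  -- approximate
  have hcl : amp H ι T ξ ∈ closure (W : Set (PiLp 2 fun _ : ι => H)) := hTK
  rw [Metric.mem_closure_iff] at hcl
  obtain ⟨b, ⟨a, ha, rfl⟩, hb⟩ := hcl ε hε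
  exact ⟨a, ha, by rwa [← dist_eq_norm, dist_comm]⟩

open ContinuousLinearMapWOT in
lemma centralizer_wot_closed (S : Set (H →L[ℂ] H)) :
    IsClosed ((ContinuousLinearMapWOT.ofCLM : (H →L[ℂ] H) → (H →WOT[ℂ] H)) '' (Set.centralizer S)) := by
  have himg : (ContinuousLinearMapWOT.ofCLM : (H →L[ℂ] H) → (H →WOT[ℂ] H)) '' (Set.centralizer S) =
      ⋂ b ∈ S, ⋂ x : H, ⋂ y : H →L[ℂ] ℂ,
        {A : H →WOT[ℂ] H | y (A (b x)) = y (b (A x))} := by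
    ext A
    simp only [Set.mem_iInter, Set.mem_setOf_eq]
    constructor
    · rintro ⟨c, hc, rfl⟩ b hb x y
      have h1 : b * c = c * b := Set.mem_centralizer_iff.1 hc b hb
      have h2 : c (b x) = b (c x) := by
        have := congrArg (fun f : H →L[ℂ] H => f x) h1
        simpa [ContinuousLinearMap.mul_apply] using this.symm
      show y (c (b x)) = y (b (c x))
      rw [h2]
    · intro hA
      refine ⟨ContinuousLinearMapWOT.toCLM A, ?_, by simp⟩
      rw [Set.mem_centralizer_iff]
      intro b hb
      ext x
      show b ((ContinuousLinearMapWOT.toCLM A) x)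
        = (ContinuousLinearMapWOT.toCLM A) (b x)
      by_contra hne
      obtain ⟨f, hf⟩ := SeparatingDual.exists_separating_of_ne (R := ℂ) hne
      exact hf (hA b hb x f).symm
  rw [himg]
  refine isClosed_biInter fun b hb => isClosed_iInter fun x => isClosed_iInter fun y => ?_
  exact isClosed_eq (ContinuousLinearMapWOT.continuous_dual_apply (b x) y)
    (ContinuousLinearMapWOT.continuous_dual_apply x (y ∘L b))

open ContinuousLinearMapWOT in
lemma bicomm_mem_closure (M : StarSubalgebra ℂ (H →L[ℂ] H)) (T : H →L[ℂ] H)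
    (hT : T ∈ Set.centralizer (Set.centralizer (M : Set (H →L[ℂ] H)))) :
    (ContinuousLinearMapWOT.ofCLM : (H →L[ℂ] H) → (H →WOT[ℂ] H)) T ∈
      closure ((ContinuousLinearMapWOT.ofCLM : (H →L[ℂ] H) → (H →WOT[ℂ] H)) '' (M : Set (H →L[ℂ] H))) := by
  classical
  rw [mem_closure_iff_nhds_zero]
  intro U hU
  obtain ⟨V, hV, hVU⟩ := (ContinuousLinearMapWOT.hasBasis_seminorms (σ := RingHom.id ℂ) (E := H)
    (F := H)).mem_iff.mp hU
  obtain ⟨s, r, hr, rfl⟩ := (SeminormFamily.basisSets_iff _).mp hV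
  set C : ℝ≥0 := s.sup fun q => ‖q.2‖₊ with hC
  have hCpos : (0 : ℝ) < (C : ℝ) + 1 := by positivity
  set ε : ℝ := r / ((C : ℝ) + 1) with hε
  have hεpos : 0 < ε := by positivity
  set ξ : PiLp 2 (fun _ : {q // q ∈ s} => H) :=
    (WithLp.equiv 2 (∀ _ : {q // q ∈ s}, H)).symm (fun q => (q.1).1) with hξ
  obtain ⟨a, ha, hnorm⟩ := key M T hT ξ hεpos
  refine ⟨(ContinuousLinearMapWOT.ofCLM : (H →L[ℂ] H) → (H →WOT[ℂ] H)) a, ⟨a, ha, rfl⟩, hVU ?_⟩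
  rw [id, Seminorm.mem_ball_zero]
  refine Seminorm.finset_sup_apply_lt hr fun q hq => ?_
  have hval : seminormFamily (RingHom.id ℂ) H H q
      ((ContinuousLinearMapWOT.ofCLM : (H →L[ℂ] H) → (H →WOT[ℂ] H)) a - (ContinuousLinearMapWOT.ofCLM : (H →L[ℂ] H) → (H →WOT[ℂ] H)) T)
      = ‖q.2 (a q.1 - T q.1)‖ := by
    rfl
  rw [hval]
  have hcomp : a q.1 - T q.1 = pic H {q' // q' ∈ s} ⟨q, hq⟩ (amp H _ a ξ - amp H _ T ξ) := by
    rw [map_sub]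
    rfl
  have h1 : ‖a q.1 - T q.1‖ ≤ ‖amp H {q' // q' ∈ s} a ξ - amp H _ T ξ‖ := by
    rw [hcomp]; exact pic_norm_le _ _
  have h2 : ‖q.2 (a q.1 - T q.1)‖ ≤ ‖q.2‖ * ‖a q.1 - T q.1‖ :=
    ContinuousLinearMap.le_opNorm _ _
  have h3 : ‖q.2‖ ≤ (C : ℝ) := by
    have := Finset.le_sup (f := fun q : H × (H →L[ℂ] ℂ) => ‖q.2‖₊) hq
    exact_mod_cast this
  have h4 : ‖q.2‖ * ‖a q.1 - T q.1‖ ≤ (C : ℝ) * ε := by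
    apply mul_le_mul h3 (h1.trans hnorm.le) (norm_nonneg _) (by positivity)
  have h5 : (C : ℝ) * ε < r := by
    rw [hε]
    rw [div_eq_mul_inv]
    have : (C : ℝ) * (r * ((C : ℝ) + 1)⁻¹) = ((C : ℝ) / ((C : ℝ) + 1)) * r := by ring
    rw [this]
    have hlt : (C : ℝ) / ((C : ℝ) + 1) < 1 := (div_lt_one hCpos).mpr (by linarith)
    calc ((C : ℝ) / ((C : ℝ) + 1)) * r < 1 * r := by
          exact mul_lt_mul_of_pos_right hlt hr
      _ = r := one_mul r
  calc ‖q.2 (a q.1 - T q.1)‖ ≤ ‖q.2‖ * ‖a q.1 - T q.1‖ := h2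
    _ ≤ (C : ℝ) * ε := h4
    _ < r := h5

end Aux

/-- von Neumann's bicommutant theorem: a unital *-subalgebra `M` of the bounded operators
on a Hilbert space `H` equals its double commutant `M''` if and only if `M` is closed in
the weak operator topology. -/
theorem stmt3 {H : Type*} [NormedAddCommGroup H] [InnerProductSpace ℂ H] [CompleteSpace H]
    (M : StarSubalgebra ℂ (H →L[ℂ] H)) :
    Set.centralizer (Set.centralizer (M : Set (H →L[ℂ] H))) = (M : Set (H →L[ℂ] H)) ↔
      IsClosed ((ContinuousLinearMapWOT.ofCLM : (H →L[ℂ] H) → (H →WOT[ℂ] H)) '' (M : Set (H →L[ℂ] H))) := by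
  constructor
  · intro h
    rw [← h]
    exact centralizer_wot_closed _
  · intro hcl
    refine Set.Subset.antisymm ?_ Set.subset_centralizer_centralizer
    intro T hT
    have hclos := bicomm_mem_closure M T hT
    rw [hcl.closure_eq] at hclos
    obtain ⟨a, ha, hEq⟩ := hclos
    exact ContinuousLinearMapWOT.ofCLM_injective hEq ▸ ha
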